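/- For real f, φ with sin(2π f T_s) ≠ 0, integers 0 ≤ p < N, the trigonometric sum ∑_{n=p+1}^{N} cos(2π f n T_s + φ)·cos(2π f (n−p) T_s + φ) equals (1/2)·[ cos(2π f (N+1) T_s + 2φ) · sin(2π f (N−p) T_s)/sin(2π f T_s) + (N−p)·cos(2π f p T_s) ]. -/

import Mathlib

open Real Finset

lemma sum_cos_key (c α : ℝ) (m : ℕ) :
    (∑ k ∈ Finset.range m, Real.cos (c + 2 * k * α)) * Real.sin α
      = Real.sin (m * α) * Real.cos (c + ((m : ℝ) - 1) * α) := by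
  set g : ℕ → ℝ := fun k => Real.sin (c + (2 * (k : ℝ) - 1) * α) / 2 with hg
  have hterm : ∀ k : ℕ, Real.cos (c + 2 * (k : ℝ) * α) * Real.sin α = g (k + 1) - g k := by
    intro k
    simp only [hg]
    rw [div_sub_div_same, Real.sin_sub_sin]
    push_cast
    rw [show (c + (2 * ((k : ℝ) + 1) - 1) * α - (c + (2 * (k : ℝ) - 1) * α)) / 2 = α by ring,
        show (c + (2 * ((k : ℝ) + 1) - 1) * α + (c + (2 * (k : ℝ) - 1) * α)) / 2
          = c + 2 * (k : ℝ) * α by ring]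
    ring
  rw [Finset.sum_mul]
  calc ∑ k ∈ Finset.range m, Real.cos (c + 2 * (k : ℝ) * α) * Real.sin α
      = ∑ k ∈ Finset.range m, (g (k + 1) - g k) := by
        exact Finset.sum_congr rfl fun k _ => hterm k
    _ = g m - g 0 := Finset.sum_range_sub g m
    _ = (Real.sin (c + (2 * (m : ℝ) - 1) * α) - Real.sin (c + (2 * (0:ℝ) - 1) * α)) / 2 := by
        simp only [hg]; push_cast; ring
    _ = Real.sin (m * α) * Real.cos (c + ((m : ℝ) - 1) * α) := by
        rw [Real.sin_sub_sin,
          show (c + (2 * (m : ℝ) - 1) * α - (c + (2 * (0:ℝ) - 1) * α)) / 2 = m * α by ring,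
          show (c + (2 * (m : ℝ) - 1) * α + (c + (2 * (0:ℝ) - 1) * α)) / 2
            = c + ((m : ℝ) - 1) * α by ring]
        ring

theorem stmt4 (f φ Ts : ℝ) (hTs : 0 < Ts)
    (hs : Real.sin (2 * π * f * Ts) ≠ 0)
    (N p : ℕ) (hp : p < N) :
    ∑ n ∈ Finset.Icc (p + 1) N,
        Real.cos (2 * π * f * n * Ts + φ)
          * Real.cos (2 * π * f * ((n : ℝ) - p) * Ts + φ)
      = (1 / 2) * (Real.cos (2 * π * f * ((N : ℝ) + 1) * Ts + 2 * φ)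
            * Real.sin (2 * π * f * ((N : ℝ) - p) * Ts)
            / Real.sin (2 * π * f * Ts)
          + ((N : ℝ) - p) * Real.cos (2 * π * f * p * Ts)) := by
  set α := 2 * π * f * Ts with hα
  set c := 2 * π * f * (p + 2 : ℝ) * Ts + 2 * φ with hc
  set m := N - p with hm
  have hmN : (m : ℝ) = (N : ℝ) - p := by
    have := Nat.cast_sub hp.le (R := ℝ); simpa [hm] using this
  have hIcc : ∑ n ∈ Finset.Icc (p + 1) N,
        Real.cos (2 * π * f * n * Ts + φ)
          * Real.cos (2 * π * f * ((n : ℝ) - p) * Ts + φ)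
      = ∑ k ∈ Finset.range m,
        Real.cos (2 * π * f * ((p : ℝ) + 1 + k) * Ts + φ)
          * Real.cos (2 * π * f * (((p : ℝ) + 1 + k) - p) * Ts + φ) := by
    rw [← Finset.Ico_add_one_right_eq_Icc, Finset.sum_Ico_eq_sum_range]
    have h2 : N + 1 - (p + 1) = m := by omega
    rw [h2]
    refine Finset.sum_congr rfl fun k _ => ?_
    push_cast
    ring_nf
  rw [hIcc]
  have hprod : ∀ k : ℕ,
      Real.cos (2 * π * f * ((p : ℝ) + 1 + k) * Ts + φ)
          * Real.cos (2 * π * f * (((p : ℝ) + 1 + k) - p) * Ts + φ)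
        = (Real.cos (c + 2 * k * α) + Real.cos (2 * π * f * p * Ts)) / 2 := by
    intro k
    have h1 := Real.cos_add (2 * π * f * (((p:ℝ) + 1 + k)) * Ts + φ)
        (2 * π * f * (((p : ℝ) + 1 + k) - p) * Ts + φ)
    have h2 := Real.cos_sub (2 * π * f * (((p:ℝ) + 1 + k)) * Ts + φ)
        (2 * π * f * (((p : ℝ) + 1 + k) - p) * Ts + φ)
    have e1 : (2 * π * f * (((p:ℝ) + 1 + k)) * Ts + φ) +
        (2 * π * f * (((p : ℝ) + 1 + k) - p) * Ts + φ) = c + 2 * k * α := by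
      rw [hc, hα]; ring
    have e2 : (2 * π * f * (((p:ℝ) + 1 + k)) * Ts + φ) -
        (2 * π * f * (((p : ℝ) + 1 + k) - p) * Ts + φ) = 2 * π * f * p * Ts := by
      ring
    rw [e1] at h1; rw [e2] at h2
    linarith
  rw [Finset.sum_congr rfl fun k _ => hprod k]
  have hkey := sum_cos_key c α m
  have e3 : Real.sin (2 * π * f * ((N : ℝ) - p) * Ts) = Real.sin ((m : ℝ) * α) := by
    rw [hmN, hα]; ring_nf
  have e4 : Real.cos (2 * π * f * ((N : ℝ) + 1) * Ts + 2 * φ)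
      = Real.cos (c + ((m : ℝ) - 1) * α) := by
    rw [hmN, hc, hα]; ring_nf
  simp only [add_div, Finset.sum_add_distrib, Finset.sum_const, Finset.card_range,
    nsmul_eq_mul, ← Finset.sum_div]
  rw [e3, e4, ← hmN]
  field_simp
  rw [show α * (m:ℝ) = m * α by ring, show α * ((m:ℝ) - 1) = (m - 1) * α by ring]
  linarith [hkey]
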